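/- arXiv:1211.6158 — 9 statements merged into one kernel-verified Lean document; each statement's English description precedes it below -/
import Mathlib

section
/- Under the FTL setting, the cumulative stability satisfies Σ_{t=1}^T ‖w_t − w_{t+1}‖ ≤ Σ_{t=1}^T 2L/((2t−1)α) ≤ (2L/α)(1 + ln T). -/
open Finset

-- strong-convexity gap at a minimizer
lemma min_gap {E : Type*} [NormedAddCommGroup E] [NormedSpace ℝ E]
    {s : Set E} {g : E → ℝ} {μ : ℝ} (hμ : 0 ≤ μ)
    (hg : UniformConvexOn s (fun r => μ / 2 * r ^ 2) g)
    {xs : E} (hxs : xs ∈ s) (hmin : ∀ x ∈ s, g xs ≤ g x)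
    {x : E} (hx : x ∈ s) :
    μ / 2 * ‖x - xs‖ ^ 2 ≤ g x - g xs := by
  set c := μ / 2 * ‖x - xs‖ ^ 2 with hc
  have hc0 : 0 ≤ c := by positivity
  have hD0 : 0 ≤ g x - g xs := sub_nonneg.2 (hmin x hx)
  have key : ∀ a : ℝ, 0 < a → a < 1 → (1 - a) * c ≤ g x - g xs := by
    intro a ha0 ha1
    have hb0 : (0:ℝ) ≤ 1 - a := by linarith
    have hmem : a • x + (1 - a) • xs ∈ s := hg.1 hx hxs ha0.le hb0 (by ring)
    have h1 := hg.2 hx hxs ha0.le hb0 (by ring : a + (1 - a) = 1)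
    have h2 := hmin _ hmem
    have : g xs ≤ a * g x + (1 - a) * g xs - a * (1 - a) * c := le_trans h2 (by
      simpa [smul_eq_mul, hc] using h1)
    nlinarith
  rcases eq_or_lt_of_le hc0 with h | h
  · linarith
  refine le_of_forall_pos_le_add fun ε hε => ?_
  have ha0 : 0 < min (1/2) (ε / c) := lt_min (by norm_num) (div_pos hε h)
  have ha1 : min (1/2) (ε / c) < 1 := lt_of_le_of_lt (min_le_left _ _) (by norm_num)
  have := key _ ha0 ha1
  have hle : min (1/2) (ε / c) * c ≤ ε := by
    rw [← le_div_iff₀ h]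
    exact min_le_right _ _
  nlinarith

lemma sum_strong {E : Type*} [NormedAddCommGroup E] [NormedSpace ℝ E]
    {C : Set E} (hC : Convex ℝ C) {α : ℝ} {ℓ : ℕ → E → ℝ}
    (hsc : ∀ τ, StrongConvexOn C α (ℓ τ)) (s : Finset ℕ) :
    UniformConvexOn C (fun r => (s.card : ℝ) * α / 2 * r ^ 2)
      (fun x => ∑ τ ∈ s, ℓ τ x) := by
  classical
  induction s using Finset.induction with
  | empty =>
      have h0 : (fun r : ℝ => ((∅:Finset ℕ).card : ℝ) * α / 2 * r ^ 2) = (0 : ℝ → ℝ) := by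
        funext r; simp
      rw [h0]
      simpa using (convexOn_const (0:ℝ) hC).uniformConvexOn_zero
  | @insert τ s hτ ih =>
      have h := (hsc τ).add ih
      have hfun : ((fun r => α / 2 * r ^ 2) + fun r => (s.card : ℝ) * α / 2 * r ^ 2)
          = fun r => ((insert τ s).card : ℝ) * α / 2 * r ^ 2 := by
        funext r
        rw [Finset.card_insert_of_notMem hτ]
        push_cast
        simp only [Pi.add_apply]
        ring
      have hfun2 : ((ℓ τ) + fun x => ∑ x_1 ∈ s, ℓ x_1 x)
          = fun x => ∑ x_1 ∈ insert τ s, ℓ x_1 x := by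
        funext x
        simp [Finset.sum_insert hτ]
      rw [hfun, hfun2] at h
      exact h

/-- FTL cumulative stability bound: Σ‖w_t − w_{t+1}‖ ≤ Σ 2L/((2t−1)α) ≤ (2L/α)(1+ln T). -/
theorem stmt_4 {d : ℕ} (C : Set (EuclideanSpace ℝ (Fin d)))
    (hC : Convex ℝ C) (hCcpt : IsCompact C)
    (α L : ℝ) (hα : 0 < α) (hL : 0 ≤ L) (T : ℕ) (hT : 1 ≤ T)
    (ℓ : ℕ → EuclideanSpace ℝ (Fin d) → ℝ)
    (hsc : ∀ τ, StrongConvexOn C α (ℓ τ))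
    (hlip : ∀ τ, ∀ x ∈ C, ∀ y ∈ C, |ℓ τ x - ℓ τ y| ≤ L * ‖x - y‖)
    (w : ℕ → EuclideanSpace ℝ (Fin d)) (hw : ∀ t, w t ∈ C)
    (hmin : ∀ t, 1 ≤ t →
      ∀ u ∈ C, ∑ τ ∈ Finset.Icc 1 t, ℓ τ (w (t + 1)) ≤ ∑ τ ∈ Finset.Icc 1 t, ℓ τ u) :
    ∑ t ∈ Finset.Icc 1 T, ‖w t - w (t + 1)‖ ≤
        ∑ t ∈ Finset.Icc 1 T, 2 * L / ((2 * (t : ℝ) - 1) * α) ∧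
      ∑ t ∈ Finset.Icc 1 T, 2 * L / ((2 * (t : ℝ) - 1) * α) ≤
        2 * L / α * (1 + Real.log T) := by
  constructor
  · refine Finset.sum_le_sum fun t ht => ?_
    have htone : 1 ≤ t := (Finset.mem_Icc.1 ht).1
    obtain ⟨n, rfl⟩ : ∃ n, t = n + 1 := ⟨t - 1, by omega⟩
    set δ := ‖w (n+1) - w (n+2)‖ with hδ
    have hδ0 : 0 ≤ δ := norm_nonneg _
    -- strong convexity of partial sums
    have hcard : ∀ m : ℕ, ((Finset.Icc 1 m).card : ℝ) = m := by
      intro m; simp [Nat.card_Icc]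
    -- hB : from minimality at n+1
    have hB : ((n:ℝ)+1) * α / 2 * δ ^ 2 ≤
        (∑ τ ∈ Finset.Icc 1 (n+1), ℓ τ (w (n+1))) -
        (∑ τ ∈ Finset.Icc 1 (n+1), ℓ τ (w (n+2))) := by
      have h := min_gap (μ := ((n:ℝ)+1) * α) (by positivity)
        (by have := sum_strong hC hsc (Finset.Icc 1 (n+1)); rw [hcard] at this
            push_cast at this; exact this)
        (hw (n+2)) (fun u hu => hmin (n+1) (by omega) u hu) (hw (n+1))
      simpa [hδ] using h
    have hA : (n:ℝ) * α / 2 * δ ^ 2 ≤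
        (∑ τ ∈ Finset.Icc 1 n, ℓ τ (w (n+2))) -
        (∑ τ ∈ Finset.Icc 1 n, ℓ τ (w (n+1))) := by
      rcases Nat.eq_zero_or_pos n with rfl | hn
      · simp
      have h := min_gap (μ := (n:ℝ) * α) (by positivity)
        (by have := sum_strong hC hsc (Finset.Icc 1 n); rwa [hcard] at this; )
        (hw (n+1)) (fun u hu => by simpa using hmin n hn u hu) (hw (n+2))
      have hnorm : ‖w (n+2) - w (n+1)‖ = δ := by rw [hδ, norm_sub_rev]
      rw [hnorm] at h
      exact h
    have hsplit : ∀ u, ∑ τ ∈ Finset.Icc 1 (n+1), ℓ τ u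
        = (∑ τ ∈ Finset.Icc 1 n, ℓ τ u) + ℓ (n+1) u := by
      intro u; exact Finset.sum_Icc_succ_top (by omega) _
    have hlipb : ℓ (n+1) (w (n+1)) - ℓ (n+1) (w (n+2)) ≤ L * δ :=
      le_trans (le_abs_self _) (hlip (n+1) _ (hw _) _ (hw _))
    have hkey : (2*(n:ℝ)+1) * α / 2 * δ ^ 2 ≤ L * δ := by
      have := hsplit (w (n+1)); have := hsplit (w (n+2))
      nlinarith [hA, hB]
    have hn0 : (0:ℝ) ≤ (n:ℝ) := Nat.cast_nonneg n
    have hden : (0:ℝ) < (2 * ((n:ℝ)+1) - 1) * α := by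
      have h2 : (0:ℝ) < 2 * ((n:ℝ)+1) - 1 := by linarith
      positivity
    push_cast
    rcases eq_or_lt_of_le hδ0 with h0 | h0
    · rw [← h0]
      exact div_nonneg (by linarith) hden.le
    · rw [le_div_iff₀ hden]
      nlinarith
  · have step1 : ∑ t ∈ Finset.Icc 1 T, 2 * L / ((2 * (t : ℝ) - 1) * α) ≤
        ∑ t ∈ Finset.Icc 1 T, 2 * L / α * ((t:ℝ))⁻¹ := by
      refine Finset.sum_le_sum fun t ht => ?_
      have ht1 : 1 ≤ t := (Finset.mem_Icc.1 ht).1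
      have htpos : (0:ℝ) < t := by exact_mod_cast ht1
      have h1 : 2 * L / α * ((t:ℝ))⁻¹ = 2 * L / ((t:ℝ) * α) := by
        rw [mul_comm (t:ℝ) α, ← div_div]; ring
      rw [h1]
      apply div_le_div_of_nonneg_left (by positivity) (by positivity)
      have : (t:ℝ) ≤ 2 * t - 1 := by
        have : (1:ℝ) ≤ t := by exact_mod_cast ht1
        linarith
      nlinarith
    refine step1.trans ?_
    rw [← Finset.mul_sum]
    have hh : ∑ t ∈ Finset.Icc 1 T, ((t:ℝ))⁻¹ = (harmonic T : ℝ) := by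
      rw [harmonic_eq_sum_Icc]; push_cast; ring
    rw [hh]
    exact mul_le_mul_of_nonneg_left (harmonic_le_one_add_log T) (by positivity)
end

section
/- Combining the stability and forward-regret bounds for FTL: if each ℓ_t is α-strongly convex and L-Lipschitz on compact convex C and w_{t+1} = argmin_{w∈C} Σ_{τ=1}^t ℓ_τ(w), then the regret satisfies Σ_{t=1}^T [ℓ_t(w_t) − ℓ_t(w*)] ≤ (2L²/α)(1 + ln T), where w* = argmin_{w∈C} Σ_{t=1}^T ℓ_t(w). -/
open Finset

/-- Quadratic growth at a minimizer for functions satisfying a strong-convexity-type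
combination inequality with modulus `c * r ^ 2`. -/
lemma quad_growth_aux {E : Type*} [NormedAddCommGroup E] [NormedSpace ℝ E]
    {C : Set E} {f : E → ℝ} {c : ℝ}
    (hcomb : ∀ ⦃x⦄, x ∈ C → ∀ ⦃y⦄, y ∈ C → ∀ ⦃a b : ℝ⦄, 0 ≤ a → 0 ≤ b → a + b = 1 →
      f (a • x + b • y) ≤ a * f x + b * f y - a * b * (c * ‖x - y‖ ^ 2))
    (hCconv : Convex ℝ C)
    {xs y : E} (hxs : xs ∈ C) (hy : y ∈ C)
    (hminf : ∀ u ∈ C, f xs ≤ f u) :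
    f xs + c * ‖xs - y‖ ^ 2 ≤ f y := by
  set K : ℝ := c * ‖xs - y‖ ^ 2 with hK
  set D : ℝ := f y - f xs with hD
  have hD0 : 0 ≤ D := by have := hminf y hy; simp [hD]; linarith
  -- for any a ∈ (0,1], (1-a) * K ≤ D
  have key : ∀ a : ℝ, 0 < a → a ≤ 1 → (1 - a) * K ≤ D := by
    intro a ha0 ha1
    have hb0 : (0:ℝ) ≤ 1 - a := by linarith
    have hz : (1 - a) • xs + a • y ∈ C := hCconv hxs hy hb0 ha0.le (by ring)
    have h1 := hcomb hxs hy hb0 ha0.le (by ring : (1 - a) + a = 1)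
    have h2 := hminf _ hz
    have h3 : f xs ≤ (1 - a) * f xs + a * f y - (1 - a) * a * K := le_trans h2 h1
    have h4 : a * ((1 - a) * K) ≤ a * D := by nlinarith
    exact le_of_mul_le_mul_left h4 ha0
  by_contra hcon
  push_neg at hcon
  -- so D < K; derive contradiction
  have hKD : 0 < K - D := by linarith
  have hK0 : 0 < K := by linarith
  set a : ℝ := min 1 ((K - D) / (2 * K)) with ha
  have ha0 : 0 < a := lt_min one_pos (by positivity)
  have ha1 : a ≤ 1 := min_le_left _ _
  have h5 := key a ha0 ha1
  have h6 : a * K ≤ (K - D) / 2 := by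
    have : a ≤ (K - D) / (2 * K) := min_le_right _ _
    calc a * K ≤ ((K - D) / (2 * K)) * K := by nlinarith
      _ = (K - D) / 2 := by field_simp
  nlinarith

/-- FTL regret bound: for α-strongly convex, L-Lipschitz losses, the FTL regret is at most
(2L²/α)(1 + ln T). -/
theorem stmt_6 {d : ℕ} (C : Set (EuclideanSpace ℝ (Fin d)))
    (hC : Convex ℝ C) (hCcpt : IsCompact C)
    (α L : ℝ) (hα : 0 < α) (hL : 0 ≤ L) (T : ℕ) (hT : 1 ≤ T)
    (ℓ : ℕ → EuclideanSpace ℝ (Fin d) → ℝ)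
    (hsc : ∀ τ, StrongConvexOn C α (ℓ τ))
    (hlip : ∀ τ, ∀ x ∈ C, ∀ y ∈ C, |ℓ τ x - ℓ τ y| ≤ L * ‖x - y‖)
    (w : ℕ → EuclideanSpace ℝ (Fin d)) (hw : ∀ t, w t ∈ C)
    (hmin : ∀ t, 1 ≤ t →
      ∀ u ∈ C, ∑ τ ∈ Finset.Icc 1 t, ℓ τ (w (t + 1)) ≤ ∑ τ ∈ Finset.Icc 1 t, ℓ τ u)
    (wstar : EuclideanSpace ℝ (Fin d)) (hwstar : wstar ∈ C)
    (hstar : ∀ u ∈ C, ∑ t ∈ Finset.Icc 1 T, ℓ t wstar ≤ ∑ t ∈ Finset.Icc 1 T, ℓ t u) :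
    ∑ t ∈ Finset.Icc 1 T, (ℓ t (w t) - ℓ t wstar) ≤
      2 * L ^ 2 / α * (1 + Real.log T) := by
  -- Step 1: stability bound ℓ t (w t) - ℓ t (w (t+1)) ≤ 2L²/(α t)
  have stab : ∀ t : ℕ, 1 ≤ t → ℓ t (w t) - ℓ t (w (t + 1)) ≤ 2 * L ^ 2 / (α * t) := by
    intro t ht
    set F : EuclideanSpace ℝ (Fin d) → ℝ := fun u => ∑ τ ∈ Finset.Icc 1 t, ℓ τ u with hF
    have hcard : (Finset.Icc 1 t).card = t := by simp
    -- combination inequality for F with modulus (t * (α/2)) r^2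
    have hcomb : ∀ ⦃x⦄, x ∈ C → ∀ ⦃y⦄, y ∈ C → ∀ ⦃a b : ℝ⦄, 0 ≤ a → 0 ≤ b → a + b = 1 →
        F (a • x + b • y) ≤ a * F x + b * F y - a * b * ((t * α / 2) * ‖x - y‖ ^ 2) := by
      intro x hx y hy a b ha hb hab
      have : F (a • x + b • y) ≤
          ∑ τ ∈ Finset.Icc 1 t, (a * ℓ τ x + b * ℓ τ y - a * b * (α / 2 * ‖x - y‖ ^ 2)) := by
        apply Finset.sum_le_sum
        intro τ _
        have := (hsc τ).2 hx hy ha hb hab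
        simpa [smul_eq_mul] using this
      refine this.trans (le_of_eq ?_)
      rw [Finset.sum_sub_distrib, Finset.sum_add_distrib, ← Finset.mul_sum, ← Finset.mul_sum,
        Finset.sum_const, hcard, nsmul_eq_mul]
      simp only [hF]
      ring
    have hgrow := quad_growth_aux hcomb hC (hw (t + 1)) (hw t) (hmin t ht)
    -- F (w t) - F (w (t+1)) ≤ ℓ t (w t) - ℓ t (w (t+1))
    obtain ⟨s, rfl⟩ : ∃ s, t = s + 1 := ⟨t - 1, (Nat.succ_pred_eq_of_pos ht).symm⟩
    have hsplit : ∀ u, F u = (∑ τ ∈ Finset.Icc 1 s, ℓ τ u) + ℓ (s + 1) u := by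
      intro u
      exact Finset.sum_Icc_succ_top (Nat.le_add_left 1 s) _
    have hprev : (∑ τ ∈ Finset.Icc 1 s, ℓ τ (w (s + 1)))
        ≤ ∑ τ ∈ Finset.Icc 1 s, ℓ τ (w (s + 1 + 1)) := by
      rcases Nat.eq_zero_or_pos s with rfl | hs
      · simp
      · exact hmin s hs _ (hw (s + 1 + 1))
    set r : ℝ := ‖w (s + 1) - w (s + 1 + 1)‖ with hr
    have hr0 : 0 ≤ r := norm_nonneg _
    have hrrev : ‖w (s + 1 + 1) - w (s + 1)‖ = r := by rw [hr, norm_sub_rev]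
    have hFdiff : ((s + 1 : ℕ) * α / 2) * r ^ 2 ≤ F (w (s + 1)) - F (w (s + 1 + 1)) := by
      rw [hrrev] at hgrow; linarith
    have hdiff : F (w (s + 1)) - F (w (s + 1 + 1)) ≤
        ℓ (s + 1) (w (s + 1)) - ℓ (s + 1) (w (s + 1 + 1)) := by
      rw [hsplit, hsplit]; linarith
    have hlipb : ℓ (s + 1) (w (s + 1)) - ℓ (s + 1) (w (s + 1 + 1)) ≤ L * r := by
      have := hlip (s + 1) _ (hw (s + 1)) _ (hw (s + 1 + 1))
      exact le_trans (le_abs_self _) this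
    -- combine: (tα/2) r² ≤ L r  ⟹  L r ≤ 2L²/(αt)
    have hA : (0:ℝ) < (s + 1 : ℕ) * α / 2 := by positivity
    have hmain : ((s + 1 : ℕ) * α / 2) * r ^ 2 ≤ L * r := by linarith
    have ht0 : (0:ℝ) < ((s + 1 : ℕ) : ℝ) := by positivity
    have hLr : L * r ≤ 2 * L ^ 2 / (α * (s + 1 : ℕ)) := by
      rw [le_div_iff₀ (by positivity)]
      nlinarith [sq_nonneg (L - ((s + 1 : ℕ) * α / 2) * r),
        mul_le_mul_of_nonneg_left hmain hA.le]
    linarith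
  -- Step 2: be-the-leader lemma
  have btl : ∀ n : ℕ, 1 ≤ n →
      ∑ t ∈ Finset.Icc 1 n, ℓ t (w (t + 1)) ≤ ∑ t ∈ Finset.Icc 1 n, ℓ t (w (n + 1)) := by
    intro n hn
    induction n, hn using Nat.le_induction with
    | base => simp
    | succ n hn ih =>
      have hs1 : ∀ u, ∑ t ∈ Finset.Icc 1 (n + 1), ℓ t u
          = (∑ t ∈ Finset.Icc 1 n, ℓ t u) + ℓ (n + 1) u := fun u =>
        Finset.sum_Icc_succ_top (Nat.le_add_left 1 n) _
      have h1 : ∑ t ∈ Finset.Icc 1 (n + 1), ℓ t (w (t + 1))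
          = (∑ t ∈ Finset.Icc 1 n, ℓ t (w (t + 1))) + ℓ (n + 1) (w (n + 1 + 1)) :=
        Finset.sum_Icc_succ_top (Nat.le_add_left 1 n) _
      have h2 := hmin n hn _ (hw (n + 1 + 1))
      rw [h1, hs1]
      linarith
  -- Step 3: combine
  have hT1 : ∑ t ∈ Finset.Icc 1 T, ℓ t (w (T + 1)) ≤ ∑ t ∈ Finset.Icc 1 T, ℓ t wstar :=
    hmin T hT wstar hwstar
  have hbtl2 : ∑ t ∈ Finset.Icc 1 T, (ℓ t (w (t + 1)) - ℓ t wstar) ≤ 0 := by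
    rw [Finset.sum_sub_distrib]
    have := btl T hT
    linarith
  have hsum1 : ∑ t ∈ Finset.Icc 1 T, (ℓ t (w t) - ℓ t wstar)
      ≤ ∑ t ∈ Finset.Icc 1 T, (2 * L ^ 2 / (α * t)) := by
    have : ∑ t ∈ Finset.Icc 1 T, (ℓ t (w t) - ℓ t wstar)
        = (∑ t ∈ Finset.Icc 1 T, (ℓ t (w t) - ℓ t (w (t + 1))))
          + ∑ t ∈ Finset.Icc 1 T, (ℓ t (w (t + 1)) - ℓ t wstar) := by
      rw [← Finset.sum_add_distrib]; congr 1; ext t; ring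
    rw [this]
    have hterm : ∑ t ∈ Finset.Icc 1 T, (ℓ t (w t) - ℓ t (w (t + 1)))
        ≤ ∑ t ∈ Finset.Icc 1 T, (2 * L ^ 2 / (α * t)) := by
      apply Finset.sum_le_sum
      intro t htmem
      exact stab t (Finset.mem_Icc.mp htmem).1
    linarith
  -- Step 4: harmonic sum bound
  have hharm : ∑ t ∈ Finset.Icc 1 T, (2 * L ^ 2 / (α * t))
      ≤ 2 * L ^ 2 / α * (1 + Real.log T) := by
    have hrw : ∀ t ∈ Finset.Icc 1 T, 2 * L ^ 2 / (α * t) = (2 * L ^ 2 / α) * (t : ℝ)⁻¹ := by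
      intro t htmem
      have ht1 : 1 ≤ t := (Finset.mem_Icc.mp htmem).1
      have : (0:ℝ) < (t : ℝ) := by exact_mod_cast ht1
      field_simp
    rw [Finset.sum_congr rfl hrw, ← Finset.mul_sum]
    have hsum : ∑ t ∈ Finset.Icc 1 T, ((t : ℝ))⁻¹ = ((harmonic T : ℚ) : ℝ) := by
      rw [harmonic_eq_sum_Icc]
      push_cast
      rfl
    rw [hsum]
    have hlog := harmonic_le_one_add_log T
    have hc : (0:ℝ) ≤ 2 * L ^ 2 / α := by positivity
    exact mul_le_mul_of_nonneg_left hlog hc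
  linarith
end

section
/- In the FTRL setting with w_1 = argmin_{w∈C} R(w), the forward regret satisfies Σ_{t=1}^T [ℓ_t(w_{t+1}) − ℓ_t(w*)] ≤ (1/η)(R(w*) − R(w_1)) ≤ (1/η)·sup_{w∈C}‖∇R(w)‖_* · D, where D is the diameter of C in ‖·‖ and w* = argmin_{w∈C} Σ_{t=1}^T ℓ_t(w). -/
/-- FTRL forward regret: Σ[ℓ_t(w_{t+1}) − ℓ_t(w*)] ≤ (1/η)(R(w*) − R(w₁)) ≤ (1/η)·G·D,
where G bounds the (dual) norm of ∇R on C and D is the diameter of C. -/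
theorem stmt_8 {d : ℕ} (C : Set (EuclideanSpace ℝ (Fin d)))
    (hC : Convex ℝ C) (hCcpt : IsCompact C)
    (η G D : ℝ) (hη : 0 < η) (T : ℕ)
    (R : EuclideanSpace ℝ (Fin d) → ℝ)
    (R' : EuclideanSpace ℝ (Fin d) → EuclideanSpace ℝ (Fin d))
    (hRconv : ∀ u ∈ C, ∀ v ∈ C, R u ≥ R v + (inner ℝ (R' v) (u - v) : ℝ))
    (hG : ∀ u ∈ C, ‖R' u‖ ≤ G)
    (hD : ∀ x ∈ C, ∀ y ∈ C, ‖x - y‖ ≤ D)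
    (ℓ : ℕ → EuclideanSpace ℝ (Fin d) → ℝ)
    (w : ℕ → EuclideanSpace ℝ (Fin d)) (hw : ∀ t, w t ∈ C)
    (hw1 : ∀ u ∈ C, R (w 1) ≤ R u)
    (hmin : ∀ t, 1 ≤ t → ∀ u ∈ C,
      (∑ τ ∈ Finset.Icc 1 t, ℓ τ (w (t + 1))) + (1 / η) * R (w (t + 1)) ≤
        (∑ τ ∈ Finset.Icc 1 t, ℓ τ u) + (1 / η) * R u)
    (wstar : EuclideanSpace ℝ (Fin d)) (hwstar : wstar ∈ C)
    (hstar : ∀ u ∈ C, ∑ t ∈ Finset.Icc 1 T, ℓ t wstar ≤ ∑ t ∈ Finset.Icc 1 T, ℓ t u) :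
    ∑ t ∈ Finset.Icc 1 T, (ℓ t (w (t + 1)) - ℓ t wstar) ≤ (1 / η) * (R wstar - R (w 1)) ∧
      (1 / η) * (R wstar - R (w 1)) ≤ (1 / η) * G * D := by
  have hηinv : (0:ℝ) ≤ 1 / η := by positivity
  -- key induction: forward sums
  have key : ∀ S : ℕ, (∑ t ∈ Finset.Icc 1 S, ℓ t (w (t + 1))) + (1 / η) * R (w 1) ≤
      (∑ t ∈ Finset.Icc 1 S, ℓ t (w (S + 1))) + (1 / η) * R (w (S + 1)) := by
    intro S
    induction S with
    | zero => simp
    | succ n ih =>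
      have hsplit : ∀ v : ℕ → ℝ, ∑ t ∈ Finset.Icc 1 (n+1), v t =
          (∑ t ∈ Finset.Icc 1 n, v t) + v (n+1) := by
        intro v
        exact Finset.sum_Icc_succ_top (Nat.succ_le_succ (Nat.zero_le n)) v
      rw [hsplit (fun t => ℓ t (w (t+1))), hsplit (fun t => ℓ t (w (n+1+1)))]
      rcases Nat.eq_zero_or_pos n with hn | hn
      · subst hn
        have h := mul_le_mul_of_nonneg_left (hw1 (w 2) (hw 2)) hηinv
        simp only [Finset.Icc_eq_empty (by norm_num : ¬(1:ℕ) ≤ 0), Finset.sum_empty]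
        simp only [zero_add]
        linarith
      · have h1 := hmin n hn (w (n+1+1)) (hw (n+1+1))
        have h2 := ih
        linarith
  have hR1star : R (w 1) ≤ R wstar := hw1 wstar hwstar
  constructor
  · rw [Finset.sum_sub_distrib]
    rcases Nat.eq_zero_or_pos T with hT | hT
    · subst hT
      simp only [Finset.Icc_eq_empty (by norm_num : ¬(1:ℕ) ≤ 0), Finset.sum_empty, sub_self]
      nlinarith [mul_le_mul_of_nonneg_left hR1star hηinv]
    · have h1 := key T
      have h2 := hmin T hT wstar hwstar
      linarith
  · have hconv := hRconv (w 1) (hw 1) wstar hwstar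
    have hcs : (inner ℝ (R' wstar) (w 1 - wstar) : ℝ) ≥ -(G * D) := by
      have h1 : ‖(inner ℝ (R' wstar) (w 1 - wstar) : ℝ)‖ ≤ ‖R' wstar‖ * ‖w 1 - wstar‖ :=
        norm_inner_le_norm _ _
      have h2 : ‖R' wstar‖ * ‖w 1 - wstar‖ ≤ G * D :=
        mul_le_mul (hG wstar hwstar) (hD (w 1) (hw 1) wstar hwstar) (norm_nonneg _)
          ((norm_nonneg _).trans (hG wstar hwstar))
      have := abs_le.mp (h1.trans h2)
      linarith [this.1]
    have hdiff : R wstar - R (w 1) ≤ G * D := by linarith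
    calc (1 / η) * (R wstar - R (w 1)) ≤ (1 / η) * (G * D) :=
          mul_le_mul_of_nonneg_left hdiff hηinv
      _ = (1 / η) * G * D := by ring
end

section
/- Let r : C → ℝ be α-strongly convex and let g_1, g_2, … be vectors with ‖g_τ‖_* ≤ L. Define the RDA iterates (with β_t = 0): w_{t+1} = argmin_{w∈C} [Σ_{τ=1}^t ⟨g_τ, w⟩ + t·r(w)]. Then for every t ≥ 2, α‖w_t − w_{t+1}‖² ≤ ⟨(1/t)g_t − (1/(t(t−1)))Σ_{τ=1}^{t−1} g_τ, w_t − w_{t+1}⟩ ≤ (2L/t)·‖w_t − w_{t+1}‖, and hence ‖w_t − w_{t+1}‖ ≤ 2L/(αt). -/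
lemma aux_min {d : ℕ} {C : Set (EuclideanSpace ℝ (Fin d))} {α : ℝ} (hα : 0 < α)
    {r : EuclideanSpace ℝ (Fin d) → ℝ} (hr : StrongConvexOn C α r)
    (v : EuclideanSpace ℝ (Fin d)) {x y : EuclideanSpace ℝ (Fin d)}
    (hx : x ∈ C) (hy : y ∈ C)
    (hmin : ∀ u ∈ C, (inner ℝ v x : ℝ) + r x ≤ (inner ℝ v u : ℝ) + r u) :
    (inner ℝ v x : ℝ) + r x + α / 2 * ‖x - y‖ ^ 2 ≤ (inner ℝ v y : ℝ) + r y := by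
  set c : ℝ := α / 2 * ‖x - y‖ ^ 2 with hc
  have hc0 : 0 ≤ c := by positivity
  rcases eq_or_lt_of_le hc0 with h0 | hcpos
  · have := hmin y hy; linarith
  by_contra hcon
  push_neg at hcon
  set ε : ℝ := ((inner ℝ v x : ℝ) + r x + c) - ((inner ℝ v y : ℝ) + r y) with hε
  have hεpos : 0 < ε := by linarith
  set a : ℝ := min (1/2) (ε / (2 * c)) with ha
  have ha0 : 0 < a := lt_min (by norm_num) (by positivity)
  have ha1 : a ≤ 1/2 := min_le_left _ _
  have hb0 : (0:ℝ) ≤ 1 - a := by linarith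
  have hz : (1 - a) • x + a • y ∈ C := hr.1 hx hy hb0 ha0.le (by ring)
  have hconv := hr.2 hx hy hb0 ha0.le (show (1-a) + a = 1 by ring)
  have hinner : (inner ℝ v ((1 - a) • x + a • y) : ℝ)
      = (1 - a) * (inner ℝ v x : ℝ) + a * (inner ℝ v y : ℝ) := by
    rw [inner_add_right, real_inner_smul_right, real_inner_smul_right]
  have hmz := hmin _ hz
  rw [hinner] at hmz
  simp only [smul_eq_mul] at hconv
  have h2 : a * ((inner ℝ v x : ℝ) + r x) ≤ a * ((inner ℝ v y : ℝ) + r y - (1 - a) * c) := by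
    rw [hc]; nlinarith [hmz, hconv]
  have key : (inner ℝ v x : ℝ) + r x ≤ (inner ℝ v y : ℝ) + r y - (1 - a) * c :=
    (mul_le_mul_iff_right₀ ha0).mp h2
  have hac : a * c ≤ ε / 2 := by
    have := min_le_right (1/2) (ε / (2 * c))
    calc a * c ≤ (ε / (2 * c)) * c := by nlinarith
    _ = ε / 2 := by field_simp
  linarith [key, hac, hεpos]

set_option maxHeartbeats 1000000 in
/-- RDA (β_t = 0) per-step stability for an α-strongly convex regularizer. -/
theorem stmt_10 {d : ℕ} (C : Set (EuclideanSpace ℝ (Fin d)))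
    (hC : Convex ℝ C) (hCcpt : IsCompact C)
    (α L : ℝ) (hα : 0 < α) (hL : 0 ≤ L)
    (r : EuclideanSpace ℝ (Fin d) → ℝ) (hr : StrongConvexOn C α r)
    (g : ℕ → EuclideanSpace ℝ (Fin d)) (hg : ∀ τ, ‖g τ‖ ≤ L)
    (t : ℕ) (ht : 2 ≤ t)
    (wt wt1 : EuclideanSpace ℝ (Fin d)) (hwt : wt ∈ C) (hwt1 : wt1 ∈ C)
    (hmin_t : ∀ u ∈ C,
      (∑ τ ∈ Finset.Icc 1 (t - 1), (inner ℝ (g τ) wt : ℝ)) + ((t : ℝ) - 1) * r wt ≤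
        (∑ τ ∈ Finset.Icc 1 (t - 1), (inner ℝ (g τ) u : ℝ)) + ((t : ℝ) - 1) * r u)
    (hmin_t1 : ∀ u ∈ C,
      (∑ τ ∈ Finset.Icc 1 t, (inner ℝ (g τ) wt1 : ℝ)) + (t : ℝ) * r wt1 ≤
        (∑ τ ∈ Finset.Icc 1 t, (inner ℝ (g τ) u : ℝ)) + (t : ℝ) * r u) :
    α * ‖wt - wt1‖ ^ 2 ≤
        (inner ℝ ((1 / (t : ℝ)) • g t -
          (1 / ((t : ℝ) * ((t : ℝ) - 1))) • ∑ τ ∈ Finset.Icc 1 (t - 1), g τ) (wt - wt1) : ℝ) ∧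
      (inner ℝ ((1 / (t : ℝ)) • g t -
          (1 / ((t : ℝ) * ((t : ℝ) - 1))) • ∑ τ ∈ Finset.Icc 1 (t - 1), g τ) (wt - wt1) : ℝ) ≤
        2 * L / (t : ℝ) * ‖wt - wt1‖ ∧
      ‖wt - wt1‖ ≤ 2 * L / (α * (t : ℝ)) := by
  have hT : (2:ℝ) ≤ (t:ℝ) := by exact_mod_cast ht
  have hTpos : (0:ℝ) < t := by linarith
  have hT1pos : (0:ℝ) < (t:ℝ) - 1 := by linarith
  set S : EuclideanSpace ℝ (Fin d) := ∑ τ ∈ Finset.Icc 1 (t - 1), g τ with hS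
  set D : EuclideanSpace ℝ (Fin d) := wt - wt1 with hD
  -- inner of sum
  have hinnerS : ∀ w : EuclideanSpace ℝ (Fin d),
      (inner ℝ S w : ℝ) = ∑ τ ∈ Finset.Icc 1 (t - 1), (inner ℝ (g τ) w : ℝ) := by
    intro w; rw [hS, sum_inner]
  -- split the Icc 1 t sum
  have htsplit : ∀ w : EuclideanSpace ℝ (Fin d),
      (∑ τ ∈ Finset.Icc 1 t, (inner ℝ (g τ) w : ℝ))
        = (inner ℝ S w : ℝ) + (inner ℝ (g t) w : ℝ) := by
    intro w
    rw [hinnerS]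
    have h1t : 1 ≤ t - 1 + 1 := Nat.le_add_left 1 _
    have hts : t = (t - 1) + 1 := (Nat.succ_pred_eq_of_pos (by omega)).symm
    rw [hts, Finset.sum_Icc_succ_top h1t, ← hts]
  -- first application: wt minimizes (1/(t-1))⟨S,·⟩ + r
  have hA := aux_min hα hr ((1/((t:ℝ)-1)) • S) hwt hwt1 (fun u hu => by
    have h := hmin_t u hu
    rw [real_inner_smul_left, real_inner_smul_left, hinnerS, hinnerS]
    have h2 := mul_le_mul_of_nonneg_left h (le_of_lt (by positivity : (0:ℝ) < 1/((t:ℝ)-1)))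
    have he : ∀ x : ℝ, ∀ y : ℝ, 1/((t:ℝ)-1) * (x + ((t:ℝ)-1) * y) = 1/((t:ℝ)-1) * x + y := by
      intro x y; field_simp
    rw [he, he] at h2; exact h2)
  -- second application: wt1 minimizes (1/t)⟨S + g t,·⟩ + r
  have hB := aux_min hα hr ((1/(t:ℝ)) • (S + g t)) hwt1 hwt (fun u hu => by
    have h := hmin_t1 u hu
    rw [htsplit, htsplit] at h
    rw [real_inner_smul_left, real_inner_smul_left, inner_add_left, inner_add_left]
    have h2 := mul_le_mul_of_nonneg_left h (le_of_lt (by positivity : (0:ℝ) < 1/(t:ℝ)))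
    have he : ∀ x : ℝ, ∀ y : ℝ, 1/(t:ℝ) * (x + (t:ℝ) * y) = 1/(t:ℝ) * x + y := by
      intro x y; field_simp
    rw [he, he] at h2; exact h2)
  -- scalar abbreviations
  set IS : ℝ := (inner ℝ S D : ℝ) with hIS
  set IG : ℝ := (inner ℝ (g t) D : ℝ) with hIG
  have hVD : (inner ℝ ((1 / (t : ℝ)) • g t - (1 / ((t : ℝ) * ((t : ℝ) - 1))) • S) D : ℝ)
      = (1/(t:ℝ)) * IG - (1/((t:ℝ)*((t:ℝ)-1))) * IS := by
    rw [inner_sub_left, real_inner_smul_left, real_inner_smul_left]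
  -- rewrite hA, hB as scalar statements
  have hA' : (1/((t:ℝ)-1)) * (inner ℝ S wt : ℝ) + r wt + α/2 * ‖D‖^2
      ≤ (1/((t:ℝ)-1)) * (inner ℝ S wt1 : ℝ) + r wt1 := by
    rw [real_inner_smul_left, real_inner_smul_left] at hA
    exact hA
  have hB' : (1/(t:ℝ)) * ((inner ℝ S wt1 : ℝ) + (inner ℝ (g t) wt1 : ℝ)) + r wt1 + α/2 * ‖D‖^2
      ≤ (1/(t:ℝ)) * ((inner ℝ S wt : ℝ) + (inner ℝ (g t) wt : ℝ)) + r wt := by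
    rw [real_inner_smul_left, real_inner_smul_left, inner_add_left, inner_add_left] at hB
    have hsym : ‖wt1 - wt‖ = ‖D‖ := by rw [hD, norm_sub_rev]
    rw [hsym] at hB
    exact hB
  have hISD : IS = (inner ℝ S wt : ℝ) - (inner ℝ S wt1 : ℝ) := by
    rw [hIS, hD, inner_sub_right]
  have hIGD : IG = (inner ℝ (g t) wt : ℝ) - (inner ℝ (g t) wt1 : ℝ) := by
    rw [hIG, hD, inner_sub_right]
  -- part 1
  have part1 : α * ‖D‖^2 ≤ (1/(t:ℝ)) * IG - (1/((t:ℝ)*((t:ℝ)-1))) * IS := by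
    have hfield : (1/(t:ℝ)) * IG - (1/((t:ℝ)*((t:ℝ)-1))) * IS
        = (1/(t:ℝ)) * (IS + IG) - (1/((t:ℝ)-1)) * IS := by
      field_simp; ring
    rw [hfield, hISD, hIGD]
    linarith [hA', hB']
  -- norm bound on V
  have hSnorm : ‖S‖ ≤ ((t:ℝ) - 1) * L := by
    calc ‖S‖ ≤ ∑ τ ∈ Finset.Icc 1 (t - 1), ‖g τ‖ := norm_sum_le _ _
      _ ≤ ∑ τ ∈ Finset.Icc 1 (t - 1), L := Finset.sum_le_sum (fun τ _ => hg τ)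
      _ = ((t - 1 : ℕ) : ℝ) * L := by rw [Finset.sum_const, Nat.card_Icc]; simp
      _ = ((t:ℝ) - 1) * L := by
          congr 1
          have : ((t - 1 : ℕ) : ℝ) = (t:ℝ) - 1 := by
            have h1t : 1 ≤ t := by omega
            push_cast [Nat.cast_sub h1t]; ring
          exact this
  have hVnorm : ‖(1 / (t : ℝ)) • g t - (1 / ((t : ℝ) * ((t : ℝ) - 1))) • S‖ ≤ 2 * L / (t:ℝ) := by
    calc ‖(1 / (t : ℝ)) • g t - (1 / ((t : ℝ) * ((t : ℝ) - 1))) • S‖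
        ≤ ‖(1 / (t : ℝ)) • g t‖ + ‖(1 / ((t : ℝ) * ((t : ℝ) - 1))) • S‖ := norm_sub_le _ _
      _ = (1/(t:ℝ)) * ‖g t‖ + (1/((t:ℝ)*((t:ℝ)-1))) * ‖S‖ := by
          rw [norm_smul, norm_smul, Real.norm_eq_abs, Real.norm_eq_abs,
            abs_of_pos (by positivity : (0:ℝ) < 1/(t:ℝ)),
            abs_of_pos (by positivity : (0:ℝ) < 1/((t:ℝ)*((t:ℝ)-1)))]
      _ ≤ (1/(t:ℝ)) * L + (1/((t:ℝ)*((t:ℝ)-1))) * (((t:ℝ)-1) * L) := by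
          have h1 : (0:ℝ) < 1/(t:ℝ) := by positivity
          have h2 : (0:ℝ) < 1/((t:ℝ)*((t:ℝ)-1)) := by positivity
          gcongr <;> first | exact hg t | exact hSnorm
      _ = 2 * L / (t:ℝ) := by field_simp; ring
  have part2 : (inner ℝ ((1 / (t : ℝ)) • g t - (1 / ((t : ℝ) * ((t : ℝ) - 1))) • S) D : ℝ)
      ≤ 2 * L / (t:ℝ) * ‖D‖ := by
    calc (inner ℝ ((1 / (t : ℝ)) • g t - (1 / ((t : ℝ) * ((t : ℝ) - 1))) • S) D : ℝ)
        ≤ ‖(1 / (t : ℝ)) • g t - (1 / ((t : ℝ) * ((t : ℝ) - 1))) • S‖ * ‖D‖ :=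
          real_inner_le_norm _ _
      _ ≤ 2 * L / (t:ℝ) * ‖D‖ := by gcongr
  have part1' : α * ‖D‖^2 ≤ (inner ℝ ((1 / (t : ℝ)) • g t
      - (1 / ((t : ℝ) * ((t : ℝ) - 1))) • S) D : ℝ) := by rw [hVD]; exact part1
  refine ⟨part1', part2, ?_⟩
  -- part 3
  rcases eq_or_lt_of_le (norm_nonneg D) with h0 | hDpos
  · rw [← h0]; positivity
  have hchain : α * ‖D‖^2 ≤ 2 * L / (t:ℝ) * ‖D‖ := le_trans part1' part2
  have h1 : α * ‖D‖ ≤ 2 * L / (t:ℝ) := by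
    have := le_of_mul_le_mul_right (by nlinarith : (α * ‖D‖) * ‖D‖ ≤ (2 * L / (t:ℝ)) * ‖D‖) hDpos
    exact this
  rw [le_div_iff₀ (by positivity)]
  rw [le_div_iff₀ hTpos] at h1
  nlinarith [h1]
end

section
/- In the strongly convex RDA setting (β_t = 0), the cumulative stability satisfies Σ_{t=1}^T ‖w_t − w_{t+1}‖ ≤ (2L/α)(1 + ln T), and combined with zero forward regret of the follow-the-leader scheme on losses w ↦ ⟨g_t,w⟩ + r(w), the regret satisfies Σ_{t=1}^T [⟨g_t, w_t − w*⟩ + r(w_t) − r(w*)] ≤ (2L²/α)(1 + ln T). -/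
lemma rda_quad_growth {E : Type*} [NormedAddCommGroup E] [NormedSpace ℝ E]
    {C : Set E} {μ : ℝ} {f : E → ℝ} (hμ : 0 ≤ μ) (hf : StrongConvexOn C μ f)
    {m u : E} (hm : m ∈ C) (hu : u ∈ C) (hmin : ∀ v ∈ C, f m ≤ f v) :
    f m + μ / 2 * ‖u - m‖ ^ 2 ≤ f u := by
  set c : ℝ := μ / 2 * ‖u - m‖ ^ 2 with hc
  have hc0 : 0 ≤ c := by positivity
  have key : ∀ b : ℝ, 0 ≤ b → b < 1 → b * c ≤ f u - f m := by
    intro b hb hb1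
    have ha' : (0:ℝ) < 1 - b := by linarith
    have hmem : (1 - b) • u + b • m ∈ C := hf.1 hu hm ha'.le hb (by ring)
    have h3 := (hmin _ hmem).trans (hf.2 hu hm ha'.le hb (by ring))
    simp only [smul_eq_mul] at h3
    rw [hc]
    nlinarith [h3, ha', mul_pos ha' ha']
  have hD : 0 ≤ f u - f m := by linarith [hmin u hu]
  by_contra h
  push_neg at h
  have hclt : f u - f m < c := by linarith
  have hcpos : 0 < c := lt_of_le_of_lt hD hclt
  have hb := key (((f u - f m) / c + 1) / 2) (by positivity) (by
    have : (f u - f m) / c < 1 := (div_lt_one hcpos).2 hclt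
    linarith)
  have hdc : ((f u - f m) / c) * c = f u - f m := div_mul_cancel₀ _ (ne_of_gt hcpos)
  nlinarith [hb, hdc]

lemma rda_sconv {E : Type*} [NormedAddCommGroup E] [InnerProductSpace ℝ E]
    {C : Set E} {α : ℝ} {r : E → ℝ} (hC : Convex ℝ C) (hr : StrongConvexOn C α r)
    (g : ℕ → E) (t : ℕ) :
    StrongConvexOn C ((t : ℝ) * α)
      (fun u => (∑ τ ∈ Finset.Icc 1 t, (inner ℝ (g τ) u : ℝ)) + (t : ℝ) * r u) := by
  refine ⟨hC, fun x hx y hy a b ha hb hab => ?_⟩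
  have hsum : (∑ τ ∈ Finset.Icc 1 t, (inner ℝ (g τ) (a • x + b • y) : ℝ))
      = a * (∑ τ ∈ Finset.Icc 1 t, (inner ℝ (g τ) x : ℝ))
        + b * (∑ τ ∈ Finset.Icc 1 t, (inner ℝ (g τ) y : ℝ)) := by
    rw [Finset.mul_sum, Finset.mul_sum, ← Finset.sum_add_distrib]
    refine Finset.sum_congr rfl fun τ _ => ?_
    rw [inner_add_right, real_inner_smul_right, real_inner_smul_right]
  have h2 := hr.2 hx hy ha hb hab
  simp only [smul_eq_mul] at h2 ⊢
  have ht : (0:ℝ) ≤ (t : ℝ) := Nat.cast_nonneg t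
  have h3 := mul_le_mul_of_nonneg_left h2 ht
  rw [hsum]
  ring_nf
  ring_nf at h3
  linarith

lemma rda_harmonic : ∀ T : ℕ, 1 ≤ T →
    (∑ t ∈ Finset.Icc 1 T, (1 : ℝ) / t) ≤ 1 + Real.log T := by
  intro T
  induction T with
  | zero => omega
  | succ n ih =>
    intro _
    rcases Nat.eq_or_lt_of_le (Nat.one_le_iff_ne_zero.mpr (Nat.succ_ne_zero n)) with h | h
    · obtain rfl : n = 0 := by omega
      norm_num
    · have hn : 1 ≤ n := by omega
      rw [Finset.sum_Icc_succ_top (by omega)]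
      have hlog : Real.log n + 1 / (n+1 : ℝ) ≤ Real.log (n+1 : ℝ) := by
        have hx : (0:ℝ) < (n : ℝ) / (n+1 : ℝ) := by positivity
        have hne : ((n:ℝ)+1) ≠ 0 := by positivity
        have hdiv : (n:ℝ) / ((n:ℝ)+1) - 1 = -(1 / ((n:ℝ)+1)) := by field_simp; ring
        have hld := Real.log_div (show ((n:ℝ)) ≠ 0 by positivity) hne
        have hls := Real.log_le_sub_one_of_pos hx
        push_cast
        rw [hld] at hls
        linarith
      have := ih hn
      push_cast
      push_cast at hlog this
      linarith

lemma rda_telescope (f : ℕ → ℝ) : ∀ n : ℕ,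
    (∑ t ∈ Finset.Icc 1 n, (f t - f (t+1))) = f 1 - f (n+1) := by
  intro n
  induction n with
  | zero => simp
  | succ k ih => rw [Finset.sum_Icc_succ_top (by omega), ih]; ring

/-- RDA (β_t = 0) with strongly convex regularizer: cumulative stability bound
(2L/α)(1 + ln T) and regret bound (2L²/α)(1 + ln T). -/
theorem stmt_11 {d : ℕ} (C : Set (EuclideanSpace ℝ (Fin d)))
    (hC : Convex ℝ C) (hCcpt : IsCompact C)
    (α L : ℝ) (hα : 0 < α) (hL : 0 ≤ L) (T : ℕ) (hT : 1 ≤ T)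
    (r : EuclideanSpace ℝ (Fin d) → ℝ) (hr : StrongConvexOn C α r)
    (g : ℕ → EuclideanSpace ℝ (Fin d)) (hg : ∀ τ, ‖g τ‖ ≤ L)
    (w : ℕ → EuclideanSpace ℝ (Fin d)) (hw : ∀ t, w t ∈ C)
    (hw1 : ∀ u ∈ C, r (w 1) ≤ r u)
    (hmin : ∀ t, 1 ≤ t → ∀ u ∈ C,
      (∑ τ ∈ Finset.Icc 1 t, (inner ℝ (g τ) (w (t + 1)) : ℝ)) + (t : ℝ) * r (w (t + 1)) ≤
        (∑ τ ∈ Finset.Icc 1 t, (inner ℝ (g τ) u : ℝ)) + (t : ℝ) * r u)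
    (wstar : EuclideanSpace ℝ (Fin d)) (hwstar : wstar ∈ C)
    (hstar : ∀ u ∈ C,
      ∑ t ∈ Finset.Icc 1 T, ((inner ℝ (g t) wstar : ℝ) + r wstar) ≤
        ∑ t ∈ Finset.Icc 1 T, ((inner ℝ (g t) u : ℝ) + r u)) :
    ∑ t ∈ Finset.Icc 1 T, ‖w t - w (t + 1)‖ ≤ 2 * L / α * (1 + Real.log T) ∧
      ∑ t ∈ Finset.Icc 1 T, ((inner ℝ (g t) (w t - wstar) : ℝ) + r (w t) - r wstar) ≤
        2 * L ^ 2 / α * (1 + Real.log T) := by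
  -- quadratic growth at the minimizers
  have hQ : ∀ t : ℕ, 1 ≤ t → ∀ u ∈ C,
      (∑ τ ∈ Finset.Icc 1 t, (inner ℝ (g τ) (w (t + 1)) : ℝ)) + (t : ℝ) * r (w (t + 1))
        + (t : ℝ) * α / 2 * ‖u - w (t + 1)‖ ^ 2
      ≤ (∑ τ ∈ Finset.Icc 1 t, (inner ℝ (g τ) u : ℝ)) + (t : ℝ) * r u := by
    intro t ht u hu
    have h := rda_quad_growth (μ := (t : ℝ) * α) (by positivity)
      (rda_sconv hC hr g t) (hw (t + 1)) hu (hmin t ht)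
    simpa using h
  -- per-step stability
  have hstab : ∀ t : ℕ, 1 ≤ t → ‖w t - w (t + 1)‖ ≤ 2 * L / α * (1 / (t : ℝ)) := by
    intro t ht
    have htR : (0:ℝ) < (t : ℝ) := by exact_mod_cast Nat.lt_of_lt_of_le Nat.zero_lt_one ht
    have hx0 : (0:ℝ) ≤ ‖w t - w (t + 1)‖ := norm_nonneg _
    have hx2 : (t : ℝ) * α * ‖w t - w (t + 1)‖ ^ 2 ≤ 2 * L * ‖w t - w (t + 1)‖ := by
      rcases Nat.lt_or_ge t 2 with h2 | h2
      · have ht1 : t = 1 := by omega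
        subst ht1
        have H1 := hQ 1 le_rfl (w 1) (hw 1)
        simp only [Finset.Icc_self, Finset.sum_singleton, Nat.cast_one] at H1 ⊢
        have hr1 : r (w 1) ≤ r (w (1 + 1)) := hw1 (w (1 + 1)) (hw (1 + 1))
        have hcs : (inner ℝ (g 1) (w 1) : ℝ) - (inner ℝ (g 1) (w (1 + 1)) : ℝ)
            ≤ L * ‖w 1 - w (1 + 1)‖ := by
          rw [← inner_sub_right]
          exact (real_inner_le_norm _ _).trans
            (mul_le_mul_of_nonneg_right (hg 1) (norm_nonneg _))
        linarith
      · obtain ⟨s, rfl⟩ : ∃ s, t = s + 1 := ⟨t - 1, by omega⟩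
        have hs : 1 ≤ s := by omega
        have hsR : (0:ℝ) < (s : ℝ) := by exact_mod_cast hs
        have H1 := hQ (s + 1) (by omega) (w (s + 1)) (hw (s + 1))
        have H2 := hQ s hs (w (s + 1 + 1)) (hw (s + 1 + 1))
        have hxrev : ‖w (s + 1 + 1) - w (s + 1)‖ = ‖w (s + 1) - w (s + 1 + 1)‖ :=
          norm_sub_rev _ _
        rw [Finset.sum_Icc_succ_top (Nat.le_add_left 1 s),
            Finset.sum_Icc_succ_top (Nat.le_add_left 1 s)] at H1
        rw [hxrev] at H2
        have hS1 : (∑ τ ∈ Finset.Icc 1 s, (inner ℝ (g τ) (w (s + 1 + 1)) : ℝ))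
            - (∑ τ ∈ Finset.Icc 1 s, (inner ℝ (g τ) (w (s + 1)) : ℝ))
            ≤ (s : ℝ) * (L * ‖w (s + 1) - w (s + 1 + 1)‖) := by
          rw [← Finset.sum_sub_distrib]
          have hb : ∀ τ ∈ Finset.Icc 1 s,
              (inner ℝ (g τ) (w (s + 1 + 1)) : ℝ) - (inner ℝ (g τ) (w (s + 1)) : ℝ)
                ≤ L * ‖w (s + 1) - w (s + 1 + 1)‖ := by
            intro τ _
            rw [← inner_sub_right]
            calc (inner ℝ (g τ) (w (s + 1 + 1) - w (s + 1)) : ℝ)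
                ≤ ‖g τ‖ * ‖w (s + 1 + 1) - w (s + 1)‖ := real_inner_le_norm _ _
              _ ≤ L * ‖w (s + 1) - w (s + 1 + 1)‖ := by
                  rw [hxrev]; exact mul_le_mul_of_nonneg_right (hg τ) (norm_nonneg _)
          calc (∑ τ ∈ Finset.Icc 1 s,
                ((inner ℝ (g τ) (w (s + 1 + 1)) : ℝ) - (inner ℝ (g τ) (w (s + 1)) : ℝ)))
              ≤ (Finset.Icc 1 s).card • (L * ‖w (s + 1) - w (s + 1 + 1)‖) :=
                Finset.sum_le_card_nsmul _ _ _ hb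
            _ = (s : ℝ) * (L * ‖w (s + 1) - w (s + 1 + 1)‖) := by
                rw [Nat.card_Icc]; simp [nsmul_eq_mul]
        have hS2 : (inner ℝ (g (s + 1)) (w (s + 1)) : ℝ) - (inner ℝ (g (s + 1)) (w (s + 1 + 1)) : ℝ)
            ≤ L * ‖w (s + 1) - w (s + 1 + 1)‖ := by
          rw [← inner_sub_right]
          exact (real_inner_le_norm _ _).trans
            (mul_le_mul_of_nonneg_right (hg _) (norm_nonneg _))
        have hrd : r (w (s + 1)) - r (w (s + 1 + 1))
            ≤ L * ‖w (s + 1) - w (s + 1 + 1)‖ - α / 2 * ‖w (s + 1) - w (s + 1 + 1)‖ ^ 2 := by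
          have hmul : (s : ℝ) * (r (w (s + 1)) - r (w (s + 1 + 1)))
              ≤ (s : ℝ) * (L * ‖w (s + 1) - w (s + 1 + 1)‖
                  - α / 2 * ‖w (s + 1) - w (s + 1 + 1)‖ ^ 2) := by
            nlinarith [H2, hS1]
          exact le_of_mul_le_mul_left hmul hsR
        push_cast at H1 ⊢
        nlinarith [H1, H2, hS1, hS2, hrd, hsR]
    rcases eq_or_lt_of_le hx0 with h0 | hxpos
    · rw [← h0]
      have h1 : (0:ℝ) ≤ 2 * L / α := div_nonneg (by linarith) hα.le
      have h2 : (0:ℝ) ≤ 1 / (t : ℝ) := by positivity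
      exact mul_nonneg h1 h2
    · have hkey : (t : ℝ) * α * ‖w t - w (t + 1)‖ ≤ 2 * L := by nlinarith [hx2, hxpos]
      rw [show 2 * L / α * (1 / (t : ℝ)) = 2 * L / ((t : ℝ) * α) by
        rw [div_mul_div_comm, mul_one, mul_comm α]]
      rw [le_div_iff₀ (by positivity)]
      linarith
  -- cumulative stability
  have hSsum : ∑ t ∈ Finset.Icc 1 T, ‖w t - w (t + 1)‖ ≤ 2 * L / α * (1 + Real.log T) := by
    calc ∑ t ∈ Finset.Icc 1 T, ‖w t - w (t + 1)‖
        ≤ ∑ t ∈ Finset.Icc 1 T, (2 * L / α * (1 / (t : ℝ))) :=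
          Finset.sum_le_sum fun t htm => hstab t (Finset.mem_Icc.mp htm).1
      _ = 2 * L / α * ∑ t ∈ Finset.Icc 1 T, (1 / (t : ℝ)) := by rw [Finset.mul_sum]
      _ ≤ 2 * L / α * (1 + Real.log T) := by
          refine mul_le_mul_of_nonneg_left (rda_harmonic T hT) ?_
          exact div_nonneg (by linarith) hα.le
  refine ⟨hSsum, ?_⟩
  -- be-the-leader
  have hBTL : ∀ n : ℕ, (∑ t ∈ Finset.Icc 1 n, ((inner ℝ (g t) (w (t + 1)) : ℝ) + r (w (t + 1))))
      ≤ (∑ τ ∈ Finset.Icc 1 n, (inner ℝ (g τ) (w (n + 1)) : ℝ)) + (n : ℝ) * r (w (n + 1)) := by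
    intro n
    induction n with
    | zero => simp
    | succ k ih =>
      have step : (∑ τ ∈ Finset.Icc 1 k, (inner ℝ (g τ) (w (k + 1)) : ℝ)) + (k : ℝ) * r (w (k + 1))
          ≤ (∑ τ ∈ Finset.Icc 1 k, (inner ℝ (g τ) (w (k + 1 + 1)) : ℝ))
            + (k : ℝ) * r (w (k + 1 + 1)) := by
        rcases Nat.eq_zero_or_pos k with rfl | hk
        · simp
        · exact hmin k hk (w (k + 1 + 1)) (hw (k + 1 + 1))
      rw [Finset.sum_Icc_succ_top (Nat.le_add_left 1 k),
          Finset.sum_Icc_succ_top (Nat.le_add_left 1 k)]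
      push_cast
      linarith [ih, step]
  have hA : ∑ t ∈ Finset.Icc 1 T, ((inner ℝ (g t) (w (t + 1)) : ℝ) + r (w (t + 1)))
      ≤ ∑ t ∈ Finset.Icc 1 T, ((inner ℝ (g t) wstar : ℝ) + r wstar) := by
    have h1 := hBTL T
    have h2 := hmin T hT wstar hwstar
    have h3 : ∑ t ∈ Finset.Icc 1 T, ((inner ℝ (g t) wstar : ℝ) + r wstar)
        = (∑ t ∈ Finset.Icc 1 T, (inner ℝ (g t) wstar : ℝ)) + (T : ℝ) * r wstar := by
      rw [Finset.sum_add_distrib, Finset.sum_const, Nat.card_Icc]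
      simp [nsmul_eq_mul]
    rw [h3]
    linarith
  have hgoal2 : ∑ t ∈ Finset.Icc 1 T, ((inner ℝ (g t) (w t - wstar) : ℝ) + r (w t) - r wstar)
      = (∑ t ∈ Finset.Icc 1 T, ((inner ℝ (g t) (w t) : ℝ) + r (w t)))
        - ∑ t ∈ Finset.Icc 1 T, ((inner ℝ (g t) wstar : ℝ) + r wstar) := by
    rw [← Finset.sum_sub_distrib]
    exact Finset.sum_congr rfl fun t _ => by rw [inner_sub_right]; ring
  have hgap : (∑ t ∈ Finset.Icc 1 T, ((inner ℝ (g t) (w t) : ℝ) + r (w t)))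
      - ∑ t ∈ Finset.Icc 1 T, ((inner ℝ (g t) (w (t + 1)) : ℝ) + r (w (t + 1)))
      ≤ L * ∑ t ∈ Finset.Icc 1 T, ‖w t - w (t + 1)‖ := by
    rw [← Finset.sum_sub_distrib]
    have hcongr : ∀ t ∈ Finset.Icc 1 T,
        (inner ℝ (g t) (w t) : ℝ) + r (w t) - ((inner ℝ (g t) (w (t + 1)) : ℝ) + r (w (t + 1)))
          = (inner ℝ (g t) (w t - w (t + 1)) : ℝ) + (r (w t) - r (w (t + 1))) := by
      intro t _
      rw [inner_sub_right]; ring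
    rw [Finset.sum_congr rfl hcongr, Finset.sum_add_distrib,
        rda_telescope (fun t => r (w t)) T]
    have h5 : ∑ t ∈ Finset.Icc 1 T, (inner ℝ (g t) (w t - w (t + 1)) : ℝ)
        ≤ ∑ t ∈ Finset.Icc 1 T, L * ‖w t - w (t + 1)‖ :=
      Finset.sum_le_sum fun t _ => (real_inner_le_norm _ _).trans
        (mul_le_mul_of_nonneg_right (hg t) (norm_nonneg _))
    rw [← Finset.mul_sum] at h5
    have h6 : r (w 1) - r (w (T + 1)) ≤ 0 := by linarith [hw1 (w (T + 1)) (hw (T + 1))]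
    linarith
  have hfinal : L * ∑ t ∈ Finset.Icc 1 T, ‖w t - w (t + 1)‖
      ≤ 2 * L ^ 2 / α * (1 + Real.log T) := by
    have := mul_le_mul_of_nonneg_left hSsum hL
    calc L * ∑ t ∈ Finset.Icc 1 T, ‖w t - w (t + 1)‖
        ≤ L * (2 * L / α * (1 + Real.log T)) := this
      _ = 2 * L ^ 2 / α * (1 + Real.log T) := by ring
  rw [hgoal2]
  linarith [hA, hgap, hfinal]
end

section
/- Approximate FTRL stability: suppose R is 1-strongly convex on C, each ℓ_t is L-Lipschitz and convex, exact FTRL iterates w*_t satisfy ‖w*_t − w*_{t+1}‖ ≤ Lη, and approximate iterates w_t satisfy S_{t−1}(w_t) ≤ S_{t−1}(w*_t) + δ_t where S_t(w) = Σ_{τ≤t} η ℓ_τ(w) + R(w). Then ‖w_t − w_{t+1}‖ ≤ √(2δ_t) + Lη + √(2δ_{t+1}), and hence Σ_{t=1}^T ‖w_t − w_{t+1}‖ ≤ LTη + Σ_{t=1}^T (√(2δ_t) + √(2δ_{t+1})). -/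
lemma key_aux {E : Type*} [NormedAddCommGroup E] [InnerProductSpace ℝ E]
    {s : Set E} {f : E → ℝ} (hf : StrongConvexOn s 1 f) {x y : E} (hx : x ∈ s) (hy : y ∈ s)
    (hmin : ∀ u ∈ s, f x ≤ f u) {δ : ℝ} (hδ : 0 ≤ δ) (hfy : f y ≤ f x + δ) :
    ‖y - x‖ ≤ Real.sqrt (2 * δ) := by
  have hstep : ∀ a : ℝ, 0 < a → a ≤ 1 → (1 - a) / 2 * ‖y - x‖ ^ 2 ≤ δ := by
    intro a ha ha1
    have h := hf.2 hy hx ha.le (show (0:ℝ) ≤ 1 - a by linarith) (show a + (1 - a) = 1 by ring)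
    have hmem : a • y + (1 - a) • x ∈ s := hf.1 hy hx ha.le (by linarith) (by ring)
    have h2 := hmin _ hmem
    simp only [smul_eq_mul] at h
    nlinarith [h, h2, hfy]
  have hfinal : ‖y - x‖ ^ 2 / 2 ≤ δ := by
    by_contra hlt
    push_neg at hlt
    have hcpos : 0 < ‖y - x‖ ^ 2 := by nlinarith [sq_nonneg ‖y - x‖]
    have := hstep ((‖y - x‖ ^ 2 / 2 - δ) / ‖y - x‖ ^ 2) (div_pos (by linarith) hcpos)
      (by rw [div_le_one hcpos]; nlinarith)
    have hq : (‖y - x‖ ^ 2 / 2 - δ) / ‖y - x‖ ^ 2 * ‖y - x‖ ^ 2 = ‖y - x‖ ^ 2 / 2 - δ :=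
      div_mul_cancel₀ _ hcpos.ne'
    nlinarith [this, hq]
  have hc : 0 ≤ ‖y - x‖ := norm_nonneg _
  have h := Real.sqrt_le_sqrt (show ‖y - x‖ ^ 2 ≤ 2 * δ by linarith)
  rwa [Real.sqrt_sq hc] at h

/-- Approximate FTRL stability: per-step bound √(2δ_t) + Lη + √(2δ_{t+1}) and the
resulting cumulative stability bound. -/
theorem stmt_13 {d : ℕ} (C : Set (EuclideanSpace ℝ (Fin d)))
    (hC : Convex ℝ C) (hCcpt : IsCompact C)
    (L η : ℝ) (hη : 0 < η) (hL : 0 ≤ L) (T : ℕ)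
    (δ : ℕ → ℝ) (hδ : ∀ t, 0 ≤ δ t)
    (R : EuclideanSpace ℝ (Fin d) → ℝ) (hR : StrongConvexOn C 1 R)
    (ℓ : ℕ → EuclideanSpace ℝ (Fin d) → ℝ)
    (hconv : ∀ t, ConvexOn ℝ C (ℓ t))
    (hlip : ∀ t, ∀ x ∈ C, ∀ y ∈ C, |ℓ t x - ℓ t y| ≤ L * ‖x - y‖)
    (S : ℕ → EuclideanSpace ℝ (Fin d) → ℝ)
    (hS : ∀ t x, S t x = (∑ τ ∈ Finset.Icc 1 t, η * ℓ τ x) + R x)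
    -- exact FTRL iterates
    (wex : ℕ → EuclideanSpace ℝ (Fin d)) (hwex : ∀ t, wex t ∈ C)
    (hmin : ∀ t, ∀ u ∈ C, S t (wex (t + 1)) ≤ S t u)
    (hexstab : ∀ t, 1 ≤ t → ‖wex t - wex (t + 1)‖ ≤ L * η)
    -- approximate iterates
    (w : ℕ → EuclideanSpace ℝ (Fin d)) (hwmem : ∀ t, w t ∈ C)
    (happrox : ∀ t, S t (w (t + 1)) ≤ S t (wex (t + 1)) + δ (t + 1)) :
    (∀ t, 1 ≤ t →
        ‖w t - w (t + 1)‖ ≤ Real.sqrt (2 * δ t) + L * η + Real.sqrt (2 * δ (t + 1))) ∧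
      ∑ t ∈ Finset.Icc 1 T, ‖w t - w (t + 1)‖ ≤
        L * T * η + ∑ t ∈ Finset.Icc 1 T, (Real.sqrt (2 * δ t) + Real.sqrt (2 * δ (t + 1))) := by
  classical
  -- each S t is 1-strongly convex
  have hsumconv : ∀ F : Finset ℕ, ConvexOn ℝ C (fun x => ∑ τ ∈ F, η * ℓ τ x) := by
    intro F
    induction F using Finset.induction_on with
    | empty => simpa using convexOn_const (0 : ℝ) hC
    | @insert n F hn ih =>
      simp only [Finset.sum_insert hn]
      exact ((hconv n).smul hη.le).add ih
  have hSconv : ∀ t, StrongConvexOn C 1 (S t) := by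
    intro t
    refine ⟨hC, fun x hx y hy a b ha hb hab => ?_⟩
    have h1 := (hsumconv (Finset.Icc 1 t)).2 hx hy ha hb hab
    have h2 := hR.2 hx hy ha hb hab
    simp only [smul_eq_mul] at h1 h2 ⊢
    rw [hS, hS, hS] at *
    nlinarith [h1, h2]
  -- distance from approximate to exact iterate
  have hdist : ∀ t, ‖w (t + 1) - wex (t + 1)‖ ≤ Real.sqrt (2 * δ (t + 1)) := fun t =>
    key_aux (hSconv t) (hwex (t + 1)) (hwmem (t + 1)) (hmin t) (hδ (t + 1)) (happrox t)
  have hper : ∀ t, 1 ≤ t →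
      ‖w t - w (t + 1)‖ ≤ Real.sqrt (2 * δ t) + L * η + Real.sqrt (2 * δ (t + 1)) := by
    intro t ht
    obtain ⟨s, rfl⟩ : ∃ s, t = s + 1 := ⟨t - 1, by omega⟩
    have h1 := hdist s
    have h2 := hexstab (s + 1) (by omega)
    have h3 := hdist (s + 1)
    calc ‖w (s + 1) - w (s + 1 + 1)‖
        ≤ ‖w (s + 1) - wex (s + 1)‖ + ‖wex (s + 1) - wex (s + 1 + 1)‖ +
            ‖wex (s + 1 + 1) - w (s + 1 + 1)‖ := by
          have := norm_sub_le_norm_sub_add_norm_sub (w (s + 1)) (wex (s + 1)) (w (s + 1 + 1))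
          have := norm_sub_le_norm_sub_add_norm_sub (wex (s + 1)) (wex (s + 1 + 1)) (w (s + 1 + 1))
          linarith
      _ ≤ Real.sqrt (2 * δ (s + 1)) + L * η + Real.sqrt (2 * δ (s + 1 + 1)) := by
          rw [norm_sub_rev (wex (s + 1 + 1))]
          gcongr
  refine ⟨hper, ?_⟩
  calc ∑ t ∈ Finset.Icc 1 T, ‖w t - w (t + 1)‖
      ≤ ∑ t ∈ Finset.Icc 1 T, (Real.sqrt (2 * δ t) + L * η + Real.sqrt (2 * δ (t + 1))) :=
        Finset.sum_le_sum fun t ht => hper t (Finset.mem_Icc.mp ht).1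
    _ = ∑ t ∈ Finset.Icc 1 T,
          (L * η + (Real.sqrt (2 * δ t) + Real.sqrt (2 * δ (t + 1)))) :=
        Finset.sum_congr rfl fun t _ => by ring
    _ = L * T * η + ∑ t ∈ Finset.Icc 1 T, (Real.sqrt (2 * δ t) + Real.sqrt (2 * δ (t + 1))) := by
        rw [Finset.sum_add_distrib, Finset.sum_const, nsmul_eq_mul, Nat.card_Icc]
        push_cast
        ring
end

section
/- Approximate IOL one-step progress bound: with f_t(w) = η ℓ_t(w) + (1/2)‖w − w_t‖₂², exact minimizer w*_{t+1} over C, approximate iterate w_{t+1} with f_t(w_{t+1}) ≤ f_t(w*_{t+1}) + δ_t, and diameter D of C, one has η ℓ_t(w_{t+1}) ≤ η ℓ_t(w*) + (1/2)[‖w* − w_t‖² − ‖w* − w_{t+1}‖²] + δ_t + D√(2δ_t) for every w* ∈ C. -/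
lemma quad_id {d : ℕ} (a b wt : EuclideanSpace ℝ (Fin d)) (t : ℝ) :
    ‖(1 - t) • a + t • b - wt‖ ^ 2 =
      (1 - t) * ‖a - wt‖ ^ 2 + t * ‖b - wt‖ ^ 2 - t * (1 - t) * ‖a - b‖ ^ 2 := by
  set x := a - wt with hx
  set y := b - wt with hy
  have h : (1 - t) • a + t • b - wt = (1 - t) • x + t • y := by
    rw [hx, hy]; module
  have h2 : a - b = x - y := by rw [hx, hy]; abel
  rw [h, h2]
  have e1 : ‖(1 - t) • x + t • y‖ ^ 2 =
      ‖(1 - t) • x‖ ^ 2 + 2 * ((1 - t) * (t * (inner ℝ x y : ℝ))) + ‖t • y‖ ^ 2 := by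
    rw [norm_add_sq_real, real_inner_smul_left, real_inner_smul_right]
  have e2 : ‖x - y‖ ^ 2 = ‖x‖ ^ 2 - 2 * (inner ℝ x y : ℝ) + ‖y‖ ^ 2 := norm_sub_sq_real x y
  have e3 : ‖(1 - t) • x‖ ^ 2 = (1 - t) ^ 2 * ‖x‖ ^ 2 := by
    rw [norm_smul, mul_pow, Real.norm_eq_abs, sq_abs]
  have e4 : ‖t • y‖ ^ 2 = t ^ 2 * ‖y‖ ^ 2 := by
    rw [norm_smul, mul_pow, Real.norm_eq_abs, sq_abs]
  rw [e1, e3, e4]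
  linear_combination (t * (1 - t)) * e2

/-- Strong-convexity minimization inequality. -/
lemma key_ineq {d : ℕ} (C : Set (EuclideanSpace ℝ (Fin d)))
    (hC : Convex ℝ C) (η : ℝ) (hη : 0 < η)
    (ℓ : EuclideanSpace ℝ (Fin d) → ℝ) (hconv : ConvexOn ℝ C ℓ)
    (wt wex : EuclideanSpace ℝ (Fin d)) (hwex : wex ∈ C)
    (hmin : ∀ u ∈ C,
      η * ℓ wex + 1 / 2 * ‖wex - wt‖ ^ 2 ≤ η * ℓ u + 1 / 2 * ‖u - wt‖ ^ 2)
    (u : EuclideanSpace ℝ (Fin d)) (hu : u ∈ C) :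
    η * ℓ wex + 1 / 2 * ‖wex - wt‖ ^ 2 + 1 / 2 * ‖u - wex‖ ^ 2 ≤
      η * ℓ u + 1 / 2 * ‖u - wt‖ ^ 2 := by
  refine le_of_forall_pos_le_add fun ε hε => ?_
  set K : ℝ := 1 / 2 * ‖u - wex‖ ^ 2 with hK
  have hK0 : 0 ≤ K := by positivity
  set t : ℝ := min 1 (ε / (K + 1)) with htdef
  have ht0 : 0 < t := lt_min one_pos (by positivity)
  have ht1 : t ≤ 1 := min_le_left _ _
  have htK : t * K ≤ ε := by
    have h1 : t ≤ ε / (K + 1) := min_le_right _ _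
    have h2 : t * K ≤ (ε / (K + 1)) * (K + 1) :=
      mul_le_mul h1 (by linarith) hK0 (by positivity)
    rwa [div_mul_cancel₀ _ (by positivity : (K + 1 : ℝ) ≠ 0)] at h2
  have hz : (1 - t) • wex + t • u ∈ C := hC hwex hu (by linarith) ht0.le (by ring)
  have hmz := hmin _ hz
  have hconvz : ℓ ((1 - t) • wex + t • u) ≤ (1 - t) * ℓ wex + t * ℓ u :=
    hconv.2 hwex hu (by linarith) ht0.le (by ring)
  have hq := quad_id wex u wt t
  have hmul : η * ℓ ((1 - t) • wex + t • u) ≤ η * ((1 - t) * ℓ wex + t * ℓ u) :=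
    mul_le_mul_of_nonneg_left hconvz hη.le
  have hnorm2 : ‖wex - u‖ ^ 2 = ‖u - wex‖ ^ 2 := by rw [norm_sub_rev]
  rw [hq, hnorm2] at hmz
  have hcomb : t * (η * ℓ wex + 1 / 2 * ‖wex - wt‖ ^ 2) ≤
      t * (η * ℓ u + 1 / 2 * ‖u - wt‖ ^ 2) - 1 / 2 * t * (1 - t) * ‖u - wex‖ ^ 2 := by
    linarith [hmz, hmul]
  have htK2 : t * (t * K) = 1 / 2 * t * t * ‖u - wex‖ ^ 2 := by rw [hK]; ring
  have hstep : t * (η * ℓ wex + 1 / 2 * ‖wex - wt‖ ^ 2 + 1 / 2 * ‖u - wex‖ ^ 2) ≤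
      t * (η * ℓ u + 1 / 2 * ‖u - wt‖ ^ 2 + t * K) := by linarith [hcomb, htK2]
  have := (mul_le_mul_iff_right₀ ht0).mp hstep
  linarith [htK, hK]

/-- Approximate IOL one-step progress bound. -/
theorem stmt_16 {d : ℕ} (C : Set (EuclideanSpace ℝ (Fin d)))
    (hC : Convex ℝ C) (hCcpt : IsCompact C)
    (η δ D : ℝ) (hη : 0 < η) (hδ : 0 ≤ δ)
    (hD : ∀ x ∈ C, ∀ y ∈ C, ‖x - y‖ ≤ D)
    (ℓ : EuclideanSpace ℝ (Fin d) → ℝ)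
    (hconv : ConvexOn ℝ C ℓ)
    (wt wex w1 : EuclideanSpace ℝ (Fin d))
    (hwt : wt ∈ C) (hwex : wex ∈ C) (hw1 : w1 ∈ C)
    (hmin : ∀ u ∈ C,
      η * ℓ wex + 1 / 2 * ‖wex - wt‖ ^ 2 ≤ η * ℓ u + 1 / 2 * ‖u - wt‖ ^ 2)
    (happrox : η * ℓ w1 + 1 / 2 * ‖w1 - wt‖ ^ 2 ≤
      η * ℓ wex + 1 / 2 * ‖wex - wt‖ ^ 2 + δ) :
    ∀ wstar ∈ C,
      η * ℓ w1 ≤ η * ℓ wstar +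
        1 / 2 * (‖wstar - wt‖ ^ 2 - ‖wstar - w1‖ ^ 2) + δ + D * Real.sqrt (2 * δ) := by
  intro wstar hws
  have hkey := key_ineq C hC η hη ℓ hconv wt wex hwex hmin
  have h1 := hkey w1 hw1
  have hsq : ‖w1 - wex‖ ^ 2 ≤ 2 * δ := by linarith
  have hle : ‖w1 - wex‖ ≤ Real.sqrt (2 * δ) := Real.le_sqrt_of_sq_le hsq
  have hkey2 := hkey wstar hws
  have hD1 : ‖wstar - w1‖ ≤ D := hD _ hws _ hw1
  have hD2 : ‖wstar - wex‖ ≤ D := hD _ hws _ hwex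
  have hD0 : 0 ≤ D := le_trans (norm_nonneg _) hD1
  have htri : ‖wstar - w1‖ - ‖wstar - wex‖ ≤ ‖w1 - wex‖ := by
    have h := norm_sub_norm_le (wstar - w1) (wstar - wex)
    have he : wstar - w1 - (wstar - wex) = wex - w1 := by abel
    rw [he, norm_sub_rev wex w1] at h
    exact h
  have hfinal : 1 / 2 * (‖wstar - w1‖ ^ 2 - ‖wstar - wex‖ ^ 2) ≤ D * Real.sqrt (2 * δ) := by
    have hsum : ‖wstar - w1‖ + ‖wstar - wex‖ ≤ 2 * D := by linarith
    have hs0 : 0 ≤ ‖wstar - w1‖ + ‖wstar - wex‖ := by positivity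
    have hn0 : 0 ≤ ‖w1 - wex‖ := norm_nonneg _
    have hsq0 : 0 ≤ Real.sqrt (2 * δ) := Real.sqrt_nonneg _
    nlinarith [sq_nonneg (‖wstar - w1‖ - ‖wstar - wex‖)]
  have hw1t : 0 ≤ 1 / 2 * ‖w1 - wt‖ ^ 2 := by positivity
  linarith
end

section
/- Batching preserves bounded regret: let A be an online algorithm with regret R_A(n) on any sequence of n losses from a class of L-Lipschitz functions on a set C of diameter D. Construct A′ that plays in batches of size B, feeding A the average g_i of each batch. Then the regret of A′ over T = mB rounds satisfies Σ_{t=1}^T [ℓ_t(w_t′) − ℓ_t(w*)] ≤ B·R_A(⌊T/B⌋) + L·D·B, and its cumulative stability satisfies Σ_{t=1}^T ‖w_t′ − w_{t+1}′‖ ≤ (T/B)·D. -/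
private lemma batch_split (B : ℕ) (f : ℕ → ℝ) :
    ∀ m : ℕ, ∑ t ∈ Finset.Ioc 0 (m * B), f t
      = ∑ i ∈ Finset.Icc 1 m, ∑ t ∈ Finset.Ioc ((i - 1) * B) (i * B), f t := by
  intro m
  induction m with
  | zero => simp
  | succ m ih =>
    rw [Finset.sum_Icc_succ_top (by omega : 1 ≤ m + 1), ← ih,
      ← Finset.sum_Ioc_consecutive f (Nat.zero_le (m * B))
        (Nat.mul_le_mul_right B (Nat.le_succ m))]
    simp

/-- Batching preserves bounded regret: if A' plays in batches of size B, feeding the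
base algorithm A the averaged loss of each batch, then over T = m·B rounds the regret
of A' is at most B·R_A(T/B) + L·D·B and its cumulative stability is at most (T/B)·D. -/
theorem stmt_17 {d : ℕ} (C : Set (EuclideanSpace ℝ (Fin d)))
    (L D RA : ℝ) (hL : 0 ≤ L) (hD : ∀ x ∈ C, ∀ y ∈ C, ‖x - y‖ ≤ D)
    (T m B : ℕ) (hB : 1 ≤ B) (hm : 1 ≤ m) (hT : T = m * B)
    (ℓ : ℕ → EuclideanSpace ℝ (Fin d) → ℝ)
    (hlip : ∀ t, ∀ x ∈ C, ∀ y ∈ C, |ℓ t x - ℓ t y| ≤ L * ‖x - y‖)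
    -- averaged batch losses fed to the base algorithm A
    (g : ℕ → EuclideanSpace ℝ (Fin d) → ℝ)
    (hg : ∀ i x, g i x = (1 / (B : ℝ)) * ∑ t ∈ Finset.Icc ((i - 1) * B + 1) (i * B), ℓ t x)
    -- iterates of the base algorithm A on the averaged losses
    (v : ℕ → EuclideanSpace ℝ (Fin d)) (hv : ∀ i, v i ∈ C)
    (wstar : EuclideanSpace ℝ (Fin d)) (hwstar : wstar ∈ C)
    -- A has regret at most RA on the m averaged losses
    (hRA : ∑ i ∈ Finset.Icc 1 m, (g i (v i) - g i wstar) ≤ RA)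
    -- iterates of the batched algorithm A'
    (w' : ℕ → EuclideanSpace ℝ (Fin d))
    (hw' : ∀ t, 1 ≤ t → t ≤ T + 1 → w' t = v ((t - 1) / B + 1)) :
    ∑ t ∈ Finset.Icc 1 T, (ℓ t (w' t) - ℓ t wstar) ≤ (B : ℝ) * RA + L * D * B ∧
      ∑ t ∈ Finset.Icc 1 T, ‖w' t - w' (t + 1)‖ ≤ ((T : ℝ) / B) * D := by
  have hB0 : (B : ℝ) ≠ 0 := Nat.cast_ne_zero.mpr (by omega)
  have hD0 : 0 ≤ D := by
    have := hD wstar hwstar wstar hwstar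
    simpa using this
  -- within batch i, the iterate of A' equals v i
  have hwv : ∀ i, 1 ≤ i → i ≤ m → ∀ t, (i - 1) * B < t → t ≤ i * B → w' t = v i := by
    intro i hi1 hi2 t ht1 ht2
    have hiB : i * B ≤ m * B := Nat.mul_le_mul_right B hi2
    rw [hw' t (by omega) (by omega)]
    have hdiv : (t - 1) / B = i - 1 := by
      apply Nat.div_eq_of_lt_le (by omega)
      have : (i - 1) + 1 = i := by omega
      rw [this]; omega
    rw [hdiv, show (i - 1) + 1 = i from by omega]
  have hIcc : Finset.Icc 1 T = Finset.Ioc 0 T := Finset.Icc_add_one_left_eq_Ioc 0 T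
  constructor
  · -- regret bound
    have key1 : ∀ i ∈ Finset.Icc 1 m,
        ∑ t ∈ Finset.Ioc ((i - 1) * B) (i * B), (ℓ t (w' t) - ℓ t wstar)
          = (B : ℝ) * (g i (v i) - g i wstar) := by
      intro i hi
      simp only [Finset.mem_Icc] at hi
      rw [Finset.sum_congr rfl (fun t ht => by
        rw [hwv i hi.1 hi.2 t (Finset.mem_Ioc.mp ht).1 (Finset.mem_Ioc.mp ht).2])]
      rw [Finset.sum_sub_distrib, hg, hg, Finset.Icc_add_one_left_eq_Ioc]
      field_simp
    have h1 : ∑ t ∈ Finset.Icc 1 T, (ℓ t (w' t) - ℓ t wstar)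
        = (B : ℝ) * ∑ i ∈ Finset.Icc 1 m, (g i (v i) - g i wstar) := by
      rw [hIcc, hT, batch_split, Finset.mul_sum]
      exact Finset.sum_congr rfl key1
    have hBRA : (B : ℝ) * ∑ i ∈ Finset.Icc 1 m, (g i (v i) - g i wstar) ≤ (B : ℝ) * RA :=
      mul_le_mul_of_nonneg_left hRA (by positivity)
    have hLDB : 0 ≤ L * D * B := mul_nonneg (mul_nonneg hL hD0) (by positivity)
    linarith [h1.le, h1.ge]
  · -- stability bound
    have key2 : ∀ i ∈ Finset.Icc 1 m,
        ∑ t ∈ Finset.Ioc ((i - 1) * B) (i * B), ‖w' t - w' (t + 1)‖ ≤ D := by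
      intro i hi
      simp only [Finset.mem_Icc] at hi
      have hiB1 : 1 ≤ i * B := Nat.mul_le_mul hi.1 hB
      have hsub : (i - 1) * B = i * B - B := Nat.sub_one_mul i B
      obtain ⟨k, hk⟩ : ∃ k, i * B = k + 1 := ⟨i * B - 1, by omega⟩
      have hk2 : (i - 1) * B ≤ k := by omega
      rw [hk, Finset.sum_Ioc_succ_top hk2]
      have hzero : ∑ t ∈ Finset.Ioc ((i - 1) * B) k, ‖w' t - w' (t + 1)‖ = 0 := by
        apply Finset.sum_eq_zero
        intro t ht
        simp only [Finset.mem_Ioc] at ht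
        rw [hwv i hi.1 hi.2 t ht.1 (by omega),
          hwv i hi.1 hi.2 (t + 1) (by omega) (by omega), sub_self, norm_zero]
      rw [hzero, zero_add]
      have hmB : i * B ≤ m * B := Nat.mul_le_mul_right B hi.2
      have ha : w' (k + 1) = v i := hwv i hi.1 hi.2 (k + 1) (by omega) (by omega)
      have hb : w' (k + 1 + 1) = v (i + 1) := by
        rw [hw' (k + 2) (by omega) (by omega)]
        congr 1
        rw [show k + 2 - 1 = i * B from by omega, Nat.mul_div_cancel i (by omega : 0 < B)]
      rw [ha, hb]
      exact hD _ (hv i) _ (hv (i + 1))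
    have h2 : ∑ t ∈ Finset.Icc 1 T, ‖w' t - w' (t + 1)‖ ≤ (m : ℝ) * D := by
      rw [hIcc, hT, batch_split]
      calc ∑ i ∈ Finset.Icc 1 m, ∑ t ∈ Finset.Ioc ((i - 1) * B) (i * B), ‖w' t - w' (t + 1)‖
          ≤ ∑ i ∈ Finset.Icc 1 m, D := Finset.sum_le_sum key2
        _ = (m : ℝ) * D := by
          rw [Finset.sum_const, Nat.card_Icc]
          simp [nsmul_eq_mul]
    have hTB : ((T : ℝ) / B) = (m : ℝ) := by
      rw [hT]; push_cast; field_simp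
    rw [hTB]
    exact h2
end

section
/- COMiD stability: let the iterates satisfy η_t(⟨g_t, w_t⟩ + r(w_t)) ≥ D_R(w_{t+1}, w_t) + η_t(⟨g_t, w_{t+1}⟩ + r(w_{t+1})) with D_R(u,v) ≥ (1/2)‖u−v‖² and ‖g_t‖_* ≤ L, and r(w_1) ≤ r(w_{T+1}) where w_1 minimizes r over C. Then Σ_{t=1}^T ‖w_t − w_{t+1}‖ ≤ 2L Σ_{t=1}^T η_t. -/
/-- COMiD cumulative stability bound: Σ‖w_t − w_{t+1}‖ ≤ 2L Σ η_t. -/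
theorem stmt_18 {d : ℕ} (C : Set (EuclideanSpace ℝ (Fin d))) (hC : Convex ℝ C)
    (L : ℝ) (hL : 0 ≤ L) (T : ℕ)
    (η : ℕ → ℝ) (hη : ∀ t, 0 < η t)
    (r : EuclideanSpace ℝ (Fin d) → ℝ)
    (g : ℕ → EuclideanSpace ℝ (Fin d)) (hg : ∀ t, ‖g t‖ ≤ L)
    (DR : EuclideanSpace ℝ (Fin d) → EuclideanSpace ℝ (Fin d) → ℝ)
    (hDR : ∀ u v, DR u v ≥ 1 / 2 * ‖u - v‖ ^ 2)
    (w : ℕ → EuclideanSpace ℝ (Fin d)) (hw : ∀ t, w t ∈ C)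
    (hiter : ∀ t, 1 ≤ t → t ≤ T →
      η t * ((inner ℝ (g t) (w t) : ℝ) + r (w t)) ≥
        DR (w (t + 1)) (w t) + η t * ((inner ℝ (g t) (w (t + 1)) : ℝ) + r (w (t + 1))))
    (hw1 : ∀ u ∈ C, r (w 1) ≤ r u)
    (hr1 : r (w 1) ≤ r (w (T + 1))) :
    ∑ t ∈ Finset.Icc 1 T, ‖w t - w (t + 1)‖ ≤ 2 * L * ∑ t ∈ Finset.Icc 1 T, η t := by
  set a : ℕ → ℝ := fun t => ‖w t - w (t + 1)‖ with ha
  have ha0 : ∀ t, 0 ≤ a t := fun t => norm_nonneg _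
  -- per-step bound
  have key : ∀ t ∈ Finset.Icc 1 T,
      a t ^ 2 / η t ≤ 2 * L * a t + 2 * (r (w t) - r (w (t + 1))) := by
    intro t ht
    rw [Finset.mem_Icc] at ht
    have h1 := hiter t ht.1 ht.2
    have h2 := hDR (w (t + 1)) (w t)
    have hnrm : ‖w (t + 1) - w t‖ = a t := norm_sub_rev _ _
    have hin : (inner ℝ (g t) (w t) : ℝ) - inner ℝ (g t) (w (t + 1)) ≤ L * a t := by
      have : (inner ℝ (g t) (w t) : ℝ) - inner ℝ (g t) (w (t + 1))
          = inner ℝ (g t) (w t - w (t + 1)) := by rw [inner_sub_right]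
      rw [this]
      calc (inner ℝ (g t) (w t - w (t + 1)) : ℝ) ≤ ‖g t‖ * ‖w t - w (t + 1)‖ :=
            real_inner_le_norm _ _
        _ ≤ L * a t := by
            exact mul_le_mul_of_nonneg_right (hg t) (norm_nonneg _)
    have hηt := hη t
    rw [div_le_iff₀ hηt]
    have hbase : 1 / 2 * a t ^ 2 ≤
        η t * ((inner ℝ (g t) (w t) : ℝ) - inner ℝ (g t) (w (t + 1))
          + (r (w t) - r (w (t + 1)))) := by
      rw [hnrm] at h2
      nlinarith [h1, h2]
    have := le_trans hbase (by nlinarith [hin, hηt.le] :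
      η t * ((inner ℝ (g t) (w t) : ℝ) - inner ℝ (g t) (w (t + 1))
          + (r (w t) - r (w (t + 1)))) ≤ η t * (L * a t + (r (w t) - r (w (t + 1)))))
    nlinarith [this]
  -- telescoping sum of r-differences
  have tel : ∑ t ∈ Finset.Icc 1 T, (r (w t) - r (w (t + 1)))
      = r (w 1) - r (w (T + 1)) := by
    have h := Finset.sum_range_sub' (fun i => r (w (1 + i))) T
    have hre : ∑ t ∈ Finset.Icc 1 T, (r (w t) - r (w (t + 1)))
        = ∑ i ∈ Finset.range T, (r (w (1 + i)) - r (w (1 + i + 1))) := by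
      rw [← Finset.Ico_add_one_right_eq_Icc, Finset.sum_Ico_eq_sum_range]
      simp
    rw [hre]
    simpa [add_comm] using h
  have sumkey : ∑ t ∈ Finset.Icc 1 T, a t ^ 2 / η t
      ≤ 2 * L * ∑ t ∈ Finset.Icc 1 T, a t := by
    calc ∑ t ∈ Finset.Icc 1 T, a t ^ 2 / η t
        ≤ ∑ t ∈ Finset.Icc 1 T, (2 * L * a t + 2 * (r (w t) - r (w (t + 1)))) :=
          Finset.sum_le_sum key
      _ = 2 * L * ∑ t ∈ Finset.Icc 1 T, a t
          + 2 * (r (w 1) - r (w (T + 1))) := by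
          rw [Finset.sum_add_distrib, ← Finset.mul_sum, ← Finset.mul_sum, tel]
      _ ≤ 2 * L * ∑ t ∈ Finset.Icc 1 T, a t := by linarith
  -- Cauchy–Schwarz
  have CS : (∑ t ∈ Finset.Icc 1 T, a t) ^ 2
      ≤ (∑ t ∈ Finset.Icc 1 T, a t ^ 2 / η t) * (∑ t ∈ Finset.Icc 1 T, η t) := by
    have h2 := Finset.sum_mul_sq_le_sq_mul_sq (Finset.Icc 1 T)
      (fun t => a t / Real.sqrt (η t)) (fun t => Real.sqrt (η t))
    have e1 : ∀ t ∈ Finset.Icc 1 T,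
        a t / Real.sqrt (η t) * Real.sqrt (η t) = a t := by
      intro t _
      exact div_mul_cancel₀ _ (Real.sqrt_pos.mpr (hη t)).ne'
    have e2 : ∀ t ∈ Finset.Icc 1 T,
        (a t / Real.sqrt (η t)) ^ 2 = a t ^ 2 / η t := by
      intro t _
      rw [div_pow, Real.sq_sqrt (hη t).le]
    have e3 : ∀ t ∈ Finset.Icc 1 T, Real.sqrt (η t) ^ 2 = η t := by
      intro t _
      exact Real.sq_sqrt (hη t).le
    rw [Finset.sum_congr rfl e1, Finset.sum_congr rfl e2, Finset.sum_congr rfl e3] at h2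
    exact h2
  have hS : 0 ≤ ∑ t ∈ Finset.Icc 1 T, a t := Finset.sum_nonneg fun t _ => ha0 t
  have hSη : 0 ≤ ∑ t ∈ Finset.Icc 1 T, η t := Finset.sum_nonneg fun t _ => (hη t).le
  rcases eq_or_lt_of_le hS with h0 | h0
  · rw [← h0]; positivity
  · have : (∑ t ∈ Finset.Icc 1 T, a t) ^ 2
        ≤ (2 * L * ∑ t ∈ Finset.Icc 1 T, a t) * ∑ t ∈ Finset.Icc 1 T, η t :=
      le_trans CS (mul_le_mul_of_nonneg_right sumkey hSη)
    nlinarith [this]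
end
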